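/- Let φ : X → ℝ be continuous on X = 𝒜^(ℤ^d). Then ZTA(φ) ⊆ MM(φ), and moreover every μ ∈ ZTA(φ) satisfies h(μ) = h_φ, i.e., μ maximizes entropy among all maximizing measures of φ. -/

import Mathlib

open MeasureTheory Filter Topology
open scoped ENNReal Classical

namespace Freezing

/-- The configuration space `X = 𝒜^(ℤ^d)`. -/
abbrev Cfg (d : ℕ) (A : Type) : Type := (Fin d → ℤ) → A

section Defs

variable {d : ℕ} {A : Type} [Fintype A] [TopologicalSpace A] [DiscreteTopology A]
  [MeasurableSpace A] [BorelSpace A]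

/-- The shift action: `(σ^n x)_m = x_{n+m}`. -/
def shift (n : Fin d → ℤ) (x : Cfg d A) : Cfg d A := fun m => x (n + m)

/-- Shift-invariance of a measure. -/
def Invariant (μ : Measure (Cfg d A)) : Prop :=
  ∀ n : Fin d → ℤ, Measure.map (shift n) μ = μ

/-- Cylinder set `[w]` for a pattern `w` on `E_n = ([0,n-1] ∩ ℤ)^d`. -/
def cylE (n : ℕ) (w : (Fin d → Fin n) → A) : Set (Cfg d A) :=
  { x | ∀ m : Fin d → Fin n, x (fun i => ((m i : ℕ) : ℤ)) = w m }

/-- Measure-theoretic entropy `h(μ) = inf_{n ≥ 1} n^{-d} Σ_w (-μ[w] log μ[w])`. -/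
noncomputable def entropy (μ : Measure (Cfg d A)) : ℝ :=
  ⨅ n : {n : ℕ // 1 ≤ n},
    ((n.1 : ℝ) ^ d)⁻¹ *
      ∑ w : (Fin d → Fin n.1) → A, Real.negMulLog (μ (cylE n.1 w)).toReal

/-- Pressure `p_φ(β) = sup { h(μ) + β ∫ φ dμ }` over shift-invariant probability measures. -/
noncomputable def pressure (φ : Cfg d A → ℝ) (β : ℝ) : ℝ :=
  sSup { r | ∃ μ : Measure (Cfg d A), IsProbabilityMeasure μ ∧ Invariant μ ∧
    r = entropy μ + β * ∫ x, φ x ∂μ }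

/-- The set of equilibrium states of `βφ`. -/
def ES (φ : Cfg d A → ℝ) (β : ℝ) : Set (Measure (Cfg d A)) :=
  { μ | IsProbabilityMeasure μ ∧ Invariant μ ∧
      entropy μ + β * ∫ x, φ x ∂μ = pressure φ β }

/-- `φ` has a freezing phase transition at `βc`. -/
def FreezingPT (φ : Cfg d A → ℝ) (βc : ℝ) : Prop :=
  (∀ β β' : ℝ, βc < β → βc < β' → ES φ β = ES φ β') ∧
  (∀ β β' : ℝ, β < βc → βc < β' → ES φ β ≠ ES φ β')

/-- `s_φ = sup { ∫ φ dμ }` over shift-invariant probability measures. -/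
noncomputable def sPhi (φ : Cfg d A → ℝ) : ℝ :=
  sSup { r | ∃ μ : Measure (Cfg d A), IsProbabilityMeasure μ ∧ Invariant μ ∧
    r = ∫ x, φ x ∂μ }

/-- The set of maximizing measures of `φ`. -/
def MM (φ : Cfg d A → ℝ) : Set (Measure (Cfg d A)) :=
  { μ | IsProbabilityMeasure μ ∧ Invariant μ ∧ (∫ x, φ x ∂μ) = sPhi φ }

/-- `h_φ = sup { h(η) : η ∈ MM(φ) }`. -/
noncomputable def hPhi (φ : Cfg d A → ℝ) : ℝ :=
  sSup { r | ∃ μ ∈ MM φ, r = entropy μ }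

/-- The zero-temperature accumulation points of `φ`. -/
def ZTA (φ : Cfg d A → ℝ) : Set (Measure (Cfg d A)) :=
  { μ | IsProbabilityMeasure μ ∧ Invariant μ ∧
      ∃ (β : ℕ → ℝ) (μs : ℕ → Measure (Cfg d A)),
        Tendsto β atTop atTop ∧ (∀ k, μs k ∈ ES φ (β k)) ∧
        ∀ f : Cfg d A → ℝ, Continuous f →
          Tendsto (fun k => ∫ x, f x ∂(μs k)) atTop (𝓝 (∫ x, f x ∂μ)) }

/-- A subshift: nonempty, closed, invariant under every shift. -/
def IsSubshift (X₀ : Set (Cfg d A)) : Prop :=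
  X₀.Nonempty ∧ IsClosed X₀ ∧ ∀ n : Fin d → ℤ, ∀ x ∈ X₀, shift n x ∈ X₀

/-- The language `L_{E_n}(X₀)`: patterns on `E_n` appearing at the origin of points of `X₀`. -/
def langE (X₀ : Set (Cfg d A)) (n : ℕ) : Set ((Fin d → Fin n) → A) :=
  { w | ∃ x ∈ X₀, ∀ m : Fin d → Fin n, x (fun i => ((m i : ℕ) : ℤ)) = w m }

/-- Topological entropy `h_top(X₀) = inf_{n ≥ 1} n^{-d} log |L_{E_n}(X₀)|`. -/
noncomputable def topEnt (X₀ : Set (Cfg d A)) : ℝ :=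
  ⨅ n : {n : ℕ // 1 ≤ n}, ((n.1 : ℝ) ^ d)⁻¹ * Real.log ((langE X₀ n.1).ncard)

/-- A measure of maximal entropy on the subshift `X₀`. -/
def IsMME (X₀ : Set (Cfg d A)) (μ : Measure (Cfg d A)) : Prop :=
  IsProbabilityMeasure μ ∧ Invariant μ ∧ μ X₀ = 1 ∧ entropy μ = topEnt X₀

/-- Ergodicity: invariant Borel sets have measure `0` or `1`. -/
def ErgodicInv (μ : Measure (Cfg d A)) : Prop :=
  ∀ s : Set (Cfg d A), MeasurableSet s → (∀ n : Fin d → ℤ, shift n ⁻¹' s = s) →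
    μ s = 0 ∨ μ s = 1

/-- The `n`-th variation `var_n φ`, over pairs agreeing on `B_n = ([-n,n] ∩ ℤ)^d`. -/
noncomputable def varPot (φ : Cfg d A → ℝ) (n : ℕ) : ℝ :=
  sSup { r | ∃ x y : Cfg d A,
    (∀ m : Fin d → ℤ, (∀ i, |m i| ≤ (n : ℤ)) → x m = y m) ∧ r = |φ x - φ y| }

/-- Sup-norm `‖m‖_∞` of a site `m ∈ ℤ^d`. -/
def supNorm (m : Fin d → ℤ) : ℕ := Finset.univ.sup fun i => (m i).natAbs

/-- The metric `dist(x,y) = 2^{-min{‖n‖_∞ : x_n ≠ y_n}}`. -/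
noncomputable def cfgDist (x y : Cfg d A) : ℝ :=
  if x = y then 0
  else (2 : ℝ) ^
    (-((sInf { k : ℕ | ∃ m : Fin d → ℤ, supNorm m = k ∧ x m ≠ y m } : ℕ) : ℤ))

/-- Distance from a point to a subshift. -/
noncomputable def distToSub (X₀ : Set (Cfg d A)) (x : Cfg d A) : ℝ :=
  sInf { r | ∃ y ∈ X₀, r = cfgDist x y }

end Defs



section Proof14
set_option linter.unusedSectionVars false
set_option maxHeartbeats 1000000

variable {d : ℕ} {A : Type} [Fintype A] [TopologicalSpace A] [DiscreteTopology A]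
  [MeasurableSpace A] [BorelSpace A]

lemma negMulLog_le_exp_neg_one {x : ℝ} (hx : 0 ≤ x) : Real.negMulLog x ≤ Real.exp (-1) := by
  rcases eq_or_lt_of_le hx with h | h
  · simp [← h]; positivity
  · have h1 : Real.log (x⁻¹ * Real.exp (-1)) ≤ x⁻¹ * Real.exp (-1) - 1 :=
      Real.log_le_sub_one_of_pos (by positivity)
    rw [Real.log_mul (by positivity) (Real.exp_ne_zero _), Real.log_exp, Real.log_inv] at h1
    have h2 : -Real.log x ≤ x⁻¹ * Real.exp (-1) := by linarith
    have h3 := mul_le_mul_of_nonneg_left h2 hx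
    calc Real.negMulLog x = x * (-Real.log x) := by rw [Real.negMulLog]; ring
    _ ≤ x * (x⁻¹ * Real.exp (-1)) := h3
    _ = Real.exp (-1) := by field_simp

lemma isClopen_cylE {n : ℕ} (w : (Fin d → Fin n) → A) : IsClopen (cylE n w) := by
  have heq : cylE (d := d) n w =
      ⋂ m : (Fin d → Fin n), (fun x : Cfg d A => x (fun i => ((m i : ℕ) : ℤ))) ⁻¹' {w m} := by
    ext x; simp [cylE, Set.mem_iInter]
  rw [heq]
  exact isClopen_iInter_of_finite fun m =>
    (isClopen_discrete _).preimage (continuous_apply _)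

lemma toReal_le_one (ν : Measure (Cfg d A)) [IsProbabilityMeasure ν] (s : Set (Cfg d A)) :
    (ν s).toReal ≤ 1 := by
  have := ENNReal.toReal_mono ENNReal.one_ne_top (prob_le_one (μ := ν) (s := s))
  simpa using this

/-- The `n`-th finite-pattern entropy functional. -/
noncomputable def Fn (n : ℕ) (ν : Measure (Cfg d A)) : ℝ :=
  ((n : ℝ) ^ d)⁻¹ * ∑ w : (Fin d → Fin n) → A, Real.negMulLog (ν (cylE n w)).toReal

lemma entropy_eq (ν : Measure (Cfg d A)) :
    entropy ν = ⨅ n : {n : ℕ // 1 ≤ n}, Fn n.1 ν := rfl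

lemma Fn_nonneg (n : ℕ) (ν : Measure (Cfg d A)) [IsProbabilityMeasure ν] : 0 ≤ Fn n ν := by
  refine mul_nonneg (by positivity) (Finset.sum_nonneg fun w _ => ?_)
  exact Real.negMulLog_nonneg ENNReal.toReal_nonneg (toReal_le_one ν _)

lemma entropy_nonneg (ν : Measure (Cfg d A)) [IsProbabilityMeasure ν] : 0 ≤ entropy ν := by
  rw [entropy_eq]
  exact le_ciInf fun n => Fn_nonneg n.1 ν

/-- A crude uniform upper bound on entropy. -/
noncomputable def entBound (d : ℕ) (A : Type) [Fintype A] : ℝ :=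
  (Fintype.card ((Fin d → Fin 1) → A) : ℝ) * Real.exp (-1)

lemma entropy_le_Fn (ν : Measure (Cfg d A)) [IsProbabilityMeasure ν] (n : {n : ℕ // 1 ≤ n}) :
    entropy ν ≤ Fn n.1 ν := by
  rw [entropy_eq]
  exact ciInf_le ⟨0, by rintro r ⟨m, rfl⟩; exact Fn_nonneg m.1 ν⟩ n

lemma entropy_le (ν : Measure (Cfg d A)) [IsProbabilityMeasure ν] :
    entropy ν ≤ entBound d A := by
  refine (entropy_le_Fn ν ⟨1, le_rfl⟩).trans ?_
  have h1 : Fn (d := d) (A := A) 1 ν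
      = ∑ w : (Fin d → Fin 1) → A, Real.negMulLog (ν (cylE 1 w)).toReal := by
    simp [Fn]
  rw [h1, entBound]
  have := Finset.sum_le_card_nsmul Finset.univ
    (fun w : (Fin d → Fin 1) → A => Real.negMulLog (ν (cylE 1 w)).toReal)
    (Real.exp (-1)) (fun w _ => negMulLog_le_exp_neg_one ENNReal.toReal_nonneg)
  simpa [Finset.card_univ, nsmul_eq_mul] using this

lemma mass_tendsto {μ : Measure (Cfg d A)} {μs : ℕ → Measure (Cfg d A)}
    (hconv : ∀ f : Cfg d A → ℝ, Continuous f →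
      Tendsto (fun k => ∫ x, f x ∂(μs k)) atTop (𝓝 (∫ x, f x ∂μ)))
    {n : ℕ} (w : (Fin d → Fin n) → A) :
    Tendsto (fun k => ((μs k) (cylE n w)).toReal) atTop (𝓝 ((μ (cylE n w)).toReal)) := by
  have hc := isClopen_cylE (d := d) w
  have hind : Continuous ((cylE n w).indicator (1 : Cfg d A → ℝ)) :=
    continuous_indicator (by simp [hc]) continuous_const.continuousOn
  have h := hconv _ hind
  have hmeas : MeasurableSet (cylE (d := d) n w) := hc.isClosed.measurableSet
  simpa [integral_indicator_one hmeas, measureReal_def] using h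

lemma Fn_tendsto {μ : Measure (Cfg d A)} {μs : ℕ → Measure (Cfg d A)}
    (hconv : ∀ f : Cfg d A → ℝ, Continuous f →
      Tendsto (fun k => ∫ x, f x ∂(μs k)) atTop (𝓝 (∫ x, f x ∂μ)))
    (n : ℕ) :
    Tendsto (fun k => Fn n (μs k)) atTop (𝓝 (Fn n μ)) := by
  unfold Fn
  exact tendsto_const_nhds.mul <| tendsto_finset_sum _ fun w _ =>
    (Real.continuous_negMulLog.tendsto _).comp (mass_tendsto hconv w)

lemma abs_integral_le {φ : Cfg d A → ℝ} {M : ℝ} (hM : ∀ x, |φ x| ≤ M)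
    (ν : Measure (Cfg d A)) [IsProbabilityMeasure ν] : |∫ x, φ x ∂ν| ≤ M := by
  have := norm_integral_le_of_norm_le_const (μ := ν) (f := φ) (C := M)
    (Eventually.of_forall fun x => by simpa using hM x)
  simpa [measure_univ] using this

end Proof14

/-- **Theorem 6.3 (i).** `ZTA(φ) ⊆ MM(φ)`, and every `μ ∈ ZTA(φ)` maximizes
entropy among the maximizing measures of `φ`: `h(μ) = h_φ`. -/
theorem statement14 (d : ℕ) (hd : 1 ≤ d) (A : Type) [Fintype A] [TopologicalSpace A]
    [DiscreteTopology A] [MeasurableSpace A] [BorelSpace A]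
    (φ : Cfg d A → ℝ) (hφ : Continuous φ) :
    ZTA φ ⊆ MM φ ∧ ∀ μ ∈ ZTA φ, entropy μ = hPhi φ := by
  obtain ⟨M, hM⟩ : ∃ M : ℝ, ∀ x, |φ x| ≤ M := by
    obtain ⟨M, hM⟩ := (isCompact_range hφ.abs).bddAbove
    exact ⟨M, fun x => hM (Set.mem_range_self x)⟩
  set C := entBound d A with hC
  have hbddP : ∀ β : ℝ, BddAbove {r | ∃ μ : Measure (Cfg d A),
      IsProbabilityMeasure μ ∧ Invariant μ ∧ r = entropy μ + β * ∫ x, φ x ∂μ} := by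
    intro β
    refine ⟨C + |β| * M, ?_⟩
    rintro r ⟨ν, hν1, hν2, rfl⟩
    haveI := hν1
    have h1 : entropy ν ≤ C := entropy_le ν
    have h2 : β * ∫ x, φ x ∂ν ≤ |β| * M := by
      calc β * ∫ x, φ x ∂ν ≤ |β * ∫ x, φ x ∂ν| := le_abs_self _
      _ = |β| * |∫ x, φ x ∂ν| := abs_mul _ _
      _ ≤ |β| * M := mul_le_mul_of_nonneg_left (abs_integral_le hM ν) (abs_nonneg β)
    linarith
  have hbddS : BddAbove {r | ∃ μ : Measure (Cfg d A),
      IsProbabilityMeasure μ ∧ Invariant μ ∧ r = ∫ x, φ x ∂μ} := by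
    refine ⟨M, ?_⟩
    rintro r ⟨ν, hν1, hν2, rfl⟩
    haveI := hν1
    exact (le_abs_self _).trans (abs_integral_le hM ν)
  have key : ∀ μ ∈ ZTA φ, μ ∈ MM φ ∧ entropy μ = hPhi φ := by
    intro μ hμ
    obtain ⟨hμp, hμinv, β, μs, hβ, hES, hconv⟩ := hμ
    haveI := hμp
    have hprob : ∀ k, IsProbabilityMeasure (μs k) := fun k => (hES k).1
    have hinvs : ∀ k, Invariant (μs k) := fun k => (hES k).2.1
    have hpress : ∀ k, ∀ ν : Measure (Cfg d A), IsProbabilityMeasure ν → Invariant ν →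
        entropy ν + β k * ∫ x, φ x ∂ν ≤ entropy (μs k) + β k * ∫ x, φ x ∂(μs k) := by
      intro k ν h1 h2
      rw [(hES k).2.2]
      unfold pressure
      exact le_csSup (hbddP (β k)) ⟨ν, h1, h2, rfl⟩
    have hle1 : ∀ k, entropy (μs k) ≤ C := fun k => by
      haveI := hprob k; exact entropy_le (μs k)
    have hItend := hconv φ hφ
    have hfrac : Tendsto (fun k => C / β k) atTop (𝓝 0) :=
      Tendsto.div_atTop tendsto_const_nhds hβ
    have hsle : ∀ (ν : Measure (Cfg d A)), IsProbabilityMeasure ν → Invariant ν →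
        (∫ x, φ x ∂ν) ≤ sPhi φ := by
      intro ν h1 h2
      unfold sPhi
      exact le_csSup hbddS ⟨ν, h1, h2, rfl⟩
    have hIν : ∀ ν : Measure (Cfg d A), IsProbabilityMeasure ν → Invariant ν →
        (∫ x, φ x ∂ν) ≤ ∫ x, φ x ∂μ := by
      intro ν h1 h2
      haveI := h1
      have hev : ∀ᶠ k in atTop, (∫ x, φ x ∂ν) - C / β k ≤ ∫ x, φ x ∂(μs k) := by
        filter_upwards [hβ.eventually_gt_atTop 0] with k hk
        have hp := hpress k ν h1 h2
        have h0 : (0:ℝ) ≤ entropy ν := entropy_nonneg ν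
        have h4 : (∫ x, φ x ∂ν) - ∫ x, φ x ∂(μs k) ≤ C / β k :=
          (le_div_iff₀ hk).2 (by nlinarith [hle1 k])
        linarith
      have := le_of_tendsto_of_tendsto (tendsto_const_nhds.sub hfrac) hItend hev
      simpa using this
    have hμMM : μ ∈ MM φ := by
      refine ⟨hμp, hμinv, le_antisymm (hsle μ hμp hμinv) ?_⟩
      unfold sPhi
      refine csSup_le ⟨∫ x, φ x ∂μ, μ, hμp, hμinv, rfl⟩ ?_
      rintro r ⟨ν, h1, h2, rfl⟩
      exact hIν ν h1 h2
    have hstep : ∀ η : Measure (Cfg d A), η ∈ MM φ → entropy η ≤ entropy μ := by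
      intro η hη
      obtain ⟨hη1, hη2, hη3⟩ := hη
      haveI := hη1
      have hIle : ∀ k, (∫ x, φ x ∂(μs k)) ≤ ∫ x, φ x ∂η := by
        intro k
        rw [hη3]
        exact hsle (μs k) (hprob k) (hinvs k)
      have hent : ∀ k, 0 < β k → entropy η ≤ entropy (μs k) := by
        intro k hk
        have hp := hpress k η hη1 hη2
        have := mul_le_mul_of_nonneg_left (hIle k) hk.le
        linarith
      rw [entropy_eq]
      refine le_ciInf fun n => ?_
      refine ge_of_tendsto (Fn_tendsto hconv n.1) ?_
      filter_upwards [hβ.eventually_gt_atTop 0] with k hk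
      calc entropy η ≤ entropy (μs k) := hent k hk
      _ ≤ Fn n.1 (μs k) := by haveI := hprob k; exact entropy_le_Fn (μs k) n
    have hhPhi : entropy μ = hPhi φ := by
      unfold hPhi
      refine le_antisymm (le_csSup ?_ ⟨μ, hμMM, rfl⟩)
        (csSup_le ⟨entropy μ, μ, hμMM, rfl⟩ ?_)
      · refine ⟨C, ?_⟩
        rintro r ⟨η, hη, rfl⟩
        haveI := hη.1
        exact entropy_le η
      · rintro r ⟨η, hη, rfl⟩
        exact hstep η hη
    exact ⟨hμMM, hhPhi⟩
  exact ⟨fun μ hμ => (key μ hμ).1, fun μ hμ => (key μ hμ).2⟩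

end Freezing
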